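/- arXiv:1509.00637 — 2 statements merged into one kernel-verified Lean document; each statement's English description precedes it below -/
import Mathlib

section
/- Let {Y(x) : x ∈ ℤ²} be independent and identically distributed random variables with common distribution function F_Y(y) = exp(−y^{−1}/9) for y > 0, and define Z(x) = 9·Y(x) if π_1(x) = π_2(x), and Z(x) = ⋁_{y∈E(x)} Y(y) otherwise, where E(x) = {y ∈ ℤ² : |π_1(y) − π_1(x)| ≤ 1 and |π_2(y) − π_2(x)| ≤ 1}. Let A_n = {x ∈ ℤ² : −n ≤ π_1(x) ≤ n and (−n) ∨ (π_1(x) − n) ≤ π_2(x) ≤ (π_1(x) + n) ∧ n}, so f(n) = #A_n = 3n² + 3n + 1. Then each Z(x) has unit Fréchet distribution F(y) = exp(−y^{−1}), and for u_n(τ) = f(n)/τ one has P(⋁_{x∈A_n} Z(x) ≤ u_n(τ)) → exp(−τ/9) as n → ∞; that is, the sequence Z_A = {Z(x) : x ∈ A_n}_{n≥1} has spatial extremal index θ_A = 1/9. -/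
open MeasureTheory Filter Topology

noncomputable section

variable {Ω : Type*} [MeasurableSpace Ω]

/-- The 3×3 square of neighbors `E(x) = {y : |π₁(y)-π₁(x)| ≤ 1 ∧ |π₂(y)-π₂(x)| ≤ 1}`. -/
def Ebox (x : ℤ × ℤ) : Finset (ℤ × ℤ) :=
  Finset.Icc (x.1 - 1) (x.1 + 1) ×ˢ Finset.Icc (x.2 - 1) (x.2 + 1)

lemma Ebox_nonempty (x : ℤ × ℤ) : (Ebox x).Nonempty :=
  ⟨x, by simp [Ebox, Finset.mem_Icc]⟩

/-- The 1-dependent field of Example 3.2: `Z(x) = 9 Y(x)` on the diagonal and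
`Z(x) = ⋁_{y ∈ E(x)} Y(y)` off the diagonal. -/
def Zfield (Y : ℤ × ℤ → Ω → ℝ) (x : ℤ × ℤ) (ω : Ω) : ℝ :=
  if x.1 = x.2 then 9 * Y x ω else (Ebox x).sup' (Ebox_nonempty x) fun y => Y y ω

/-- `Aₙ = {x ∈ ℤ² : -n ≤ π₁(x) ≤ n, (-n) ∨ (π₁(x)-n) ≤ π₂(x) ≤ (π₁(x)+n) ∧ n}`. -/
def Adiam (n : ℕ) : Finset (ℤ × ℤ) :=
  (Finset.Icc (-(n : ℤ)) (n : ℤ) ×ˢ Finset.Icc (-(n : ℤ)) (n : ℤ)).filter fun x =>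
    (-(n : ℤ)) ⊔ (x.1 - (n : ℤ)) ≤ x.2 ∧ x.2 ≤ (x.1 + (n : ℤ)) ⊓ (n : ℤ)

set_option linter.unusedSectionVars false

lemma mem_Adiam {n : ℕ} {x : ℤ × ℤ} : x ∈ Adiam n ↔
    -(n:ℤ) ≤ x.1 ∧ x.1 ≤ n ∧ -(n:ℤ) ≤ x.2 ∧ x.2 ≤ n ∧ x.1 - x.2 ≤ n ∧ x.2 - x.1 ≤ n := by
  simp only [Adiam, Finset.mem_filter, Finset.mem_product, Finset.mem_Icc, sup_le_iff, le_inf_iff]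
  omega
def Trot (p : ℤ × ℤ) : ℤ × ℤ := (p.2 - p.1, -p.1)
lemma Trot_inj : Function.Injective Trot := by
  intro p q h
  simp only [Trot, Prod.mk.injEq] at h
  exact Prod.ext (by omega) (by omega)
def Fpar (n : ℕ) : Finset (ℤ × ℤ) := Finset.Icc 1 (n:ℤ) ×ˢ Finset.Icc 0 (n:ℤ)
lemma mem_Fpar {n : ℕ} {x : ℤ × ℤ} : x ∈ Fpar n ↔ 1 ≤ x.1 ∧ x.1 ≤ n ∧ 0 ≤ x.2 ∧ x.2 ≤ n := by
  simp only [Fpar, Finset.mem_product, Finset.mem_Icc]; tauto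

lemma Adiam_card (n : ℕ) : ((Adiam n).card : ℤ) = 3 * (n:ℤ)^2 + 3*(n:ℤ) + 1 := by
  have hdecomp : Adiam n =
      insert ((0:ℤ),(0:ℤ)) ((Fpar n ∪ (Fpar n).image Trot) ∪ (Fpar n).image (Trot ∘ Trot)) := by
    ext x
    simp only [mem_Adiam, Finset.mem_insert, Finset.mem_union, Finset.mem_image, mem_Fpar,
      Function.comp, Trot, Prod.mk.injEq, Prod.ext_iff]
    constructor
    · rintro ⟨h1, h2, h3, h4, h5, h6⟩
      by_cases h0 : x.1 = 0 ∧ x.2 = 0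
      · exact Or.inl ⟨h0.1, h0.2⟩
      right
      by_cases hc1 : 1 ≤ x.1 ∧ 0 ≤ x.2
      · exact Or.inl (Or.inl ⟨hc1.1, h2, hc1.2, h4⟩)
      by_cases hc2 : x.1 ≤ 0 ∧ x.1 + 1 ≤ x.2
      · exact Or.inr ⟨(x.2 - x.1, -x.1), by dsimp only; omega⟩
      · exact Or.inl (Or.inr ⟨(-x.2, x.1 - x.2), by dsimp only; omega⟩)
    · rintro (⟨e1, e2⟩ | (⟨a,b,c,d⟩ | ⟨p, ⟨a,b,c,d⟩, e1, e2⟩) | ⟨p, ⟨a,b,c,d⟩, e1, e2⟩) <;> omega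
  have hnotmem : ((0:ℤ),(0:ℤ)) ∉ ((Fpar n ∪ (Fpar n).image Trot) ∪ (Fpar n).image (Trot ∘ Trot)) := by
    simp only [Finset.mem_union, Finset.mem_image, mem_Fpar, Function.comp, Trot, Prod.mk.injEq,
      Prod.ext_iff]
    push_neg
    refine ⟨⟨by norm_num, ?_⟩, ?_⟩ <;> rintro ⟨a,b⟩ ⟨h1,h2,h3,h4⟩ <;> simp <;> omega
  have hd1 : Disjoint (Fpar n) ((Fpar n).image Trot) := by
    rw [Finset.disjoint_left]
    rintro x hx hx'
    rw [mem_Fpar] at hx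
    simp only [Finset.mem_image, mem_Fpar, Trot, Prod.mk.injEq] at hx'
    obtain ⟨p, hp, e1, e2⟩ := hx'
    omega
  have hd2 : Disjoint (Fpar n ∪ (Fpar n).image Trot) ((Fpar n).image (Trot ∘ Trot)) := by
    rw [Finset.disjoint_left]
    rintro x hx hx'
    simp only [Finset.mem_image, mem_Fpar, Function.comp, Trot, Prod.mk.injEq] at hx'
    obtain ⟨p, hp, e1, e2⟩ := hx'
    simp only [Finset.mem_union, Finset.mem_image, mem_Fpar, Trot, Prod.mk.injEq] at hx
    rcases hx with h | ⟨q, hq, f1, f2⟩ <;> omega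
  have h1 : ((n:ℤ) + 1 - 1).toNat = n := by omega
  have h2 : ((n:ℤ) + 1 - 0).toNat = n + 1 := by omega
  have hcard : (Fpar n).card = n * (n+1) := by
    rw [Fpar, Finset.card_product, Int.card_Icc, Int.card_Icc, h1, h2]
  rw [hdecomp, Finset.card_insert_of_notMem hnotmem, Finset.card_union_of_disjoint hd2,
    Finset.card_union_of_disjoint hd1, Finset.card_image_of_injective _ Trot_inj,
    Finset.card_image_of_injective _ (Trot_inj.comp Trot_inj), hcard]
  push_cast
  ring

lemma ratlim (a b c A B C : ℝ) (hA : A ≠ 0) :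
    Tendsto (fun n : ℕ => (a*(n:ℝ)^2 + b*n + c) / (A*(n:ℝ)^2 + B*n + C)) atTop (𝓝 (a/A)) := by
  have hnat : Tendsto (fun n : ℕ => (n:ℝ)) atTop atTop := tendsto_natCast_atTop_atTop
  have hsq : Tendsto (fun n : ℕ => (n:ℝ)^2) atTop atTop := (tendsto_pow_atTop two_ne_zero).comp hnat
  have h1 : ∀ d : ℝ, Tendsto (fun n : ℕ => d / (n:ℝ)) atTop (𝓝 0) := fun d =>
    tendsto_const_nhds.div_atTop hnat
  have h2 : ∀ d : ℝ, Tendsto (fun n : ℕ => d / (n:ℝ)^2) atTop (𝓝 0) := fun d =>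
    tendsto_const_nhds.div_atTop hsq
  have hmain : Tendsto (fun n : ℕ => (a + b/(n:ℝ) + c/(n:ℝ)^2) / (A + B/(n:ℝ) + C/(n:ℝ)^2))
      atTop (𝓝 (a/A)) := by
    have hnum : Tendsto (fun n : ℕ => a + b/(n:ℝ) + c/(n:ℝ)^2) atTop (𝓝 a) := by
      simpa using (tendsto_const_nhds.add (h1 b)).add (h2 c)
    have hden : Tendsto (fun n : ℕ => A + B/(n:ℝ) + C/(n:ℝ)^2) atTop (𝓝 A) := by
      simpa using (tendsto_const_nhds.add (h1 B)).add (h2 C)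
    exact hnum.div hden hA
  refine hmain.congr' ?_
  filter_upwards [eventually_ge_atTop 1] with n hn
  have hn0 : ((n:ℝ)) ≠ 0 := by positivity
  have hn2 : ((n:ℝ))^2 ≠ 0 := pow_ne_zero _ hn0
  have e1 : (a + b/(n:ℝ) + c/(n:ℝ)^2) * (n:ℝ)^2 = a*(n:ℝ)^2 + b*n + c := by
    field_simp
  have e2 : (A + B/(n:ℝ) + C/(n:ℝ)^2) * (n:ℝ)^2 = A*(n:ℝ)^2 + B*n + C := by
    field_simp
  rw [← e1, ← e2, mul_div_mul_right _ _ hn2]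

lemma Ebox_card (x : ℤ × ℤ) : (Ebox x).card = 9 := by
  have h1 : x.1 + 1 + 1 - (x.1 - 1) = 3 := by ring
  have h2 : x.2 + 1 + 1 - (x.2 - 1) = 3 := by ring
  rw [Ebox, Finset.card_product, Int.card_Icc, Int.card_Icc, h1, h2]
  rfl

lemma meas_biInter_le (μ : Measure Ω) (Y : ℤ × ℤ → Ω → ℝ)
    (hind : ProbabilityTheory.iIndepFun Y μ)
    (S : Finset (ℤ × ℤ)) (t : ℤ × ℤ → ℝ) :
    μ (⋂ y ∈ S, {ω | Y y ω ≤ t y}) = ∏ y ∈ S, μ {ω | Y y ω ≤ t y} :=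
  hind.meas_biInter fun i _ => ⟨Set.Iic (t i), measurableSet_Iic, rfl⟩

lemma margin (μ : Measure Ω) [IsProbabilityMeasure μ] (Y : ℤ × ℤ → Ω → ℝ)
    (hind : ProbabilityTheory.iIndepFun Y μ)
    (hY : ∀ x, ∀ y : ℝ, 0 < y → (μ {ω | Y x ω ≤ y}).toReal = Real.exp (-(y⁻¹ / 9)))
    (x : ℤ × ℤ) (y : ℝ) (hy : 0 < y) :
    (μ {ω | Zfield Y x ω ≤ y}).toReal = Real.exp (-y⁻¹) := by
  by_cases hx : x.1 = x.2
  · have hset : {ω | Zfield Y x ω ≤ y} = {ω | Y x ω ≤ y / 9} := by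
      ext ω
      simp only [Zfield, hx, if_pos, Set.mem_setOf_eq,
        le_div_iff₀ (by norm_num : (0:ℝ) < 9), mul_comm]
    have harg : -((y/9)⁻¹/9) = -y⁻¹ := by
      rw [inv_div, div_div]
      congr 1
      rw [eq_comm, inv_eq_iff_eq_inv, inv_div]
      ring
    rw [hset, hY x (y/9) (by positivity), harg]
  · have hset : {ω | Zfield Y x ω ≤ y} = ⋂ z ∈ Ebox x, {ω | Y z ω ≤ y} := by
      ext ω
      simp only [Zfield, hx, Set.mem_setOf_eq, Set.mem_iInter, if_false,
        Finset.sup'_le_iff]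
    rw [hset, meas_biInter_le μ Y hind, ENNReal.toReal_prod]
    have : ∀ z ∈ Ebox x, (μ {ω | Y z ω ≤ y}).toReal = Real.exp (-(y⁻¹/9)) := fun z _ => hY z y hy
    have harg : ((9:ℕ):ℝ) * -(y⁻¹/9) = -y⁻¹ := by push_cast; ring
    rw [Finset.prod_congr rfl this, Finset.prod_const, Ebox_card, ← Real.exp_nat_mul, harg]

lemma mem_Ebox {x y : ℤ × ℤ} : y ∈ Ebox x ↔
    x.1 - 1 ≤ y.1 ∧ y.1 ≤ x.1 + 1 ∧ x.2 - 1 ≤ y.2 ∧ y.2 ≤ x.2 + 1 := by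
  simp only [Ebox, Finset.mem_product, Finset.mem_Icc]; tauto
def Dg (n : ℕ) : Finset (ℤ × ℤ) := (Adiam n).filter fun y => y.1 = y.2
def Cb (n : ℕ) : Finset (ℤ × ℤ) := ((Adiam n).filter fun x => ¬ x.1 = x.2).biUnion Ebox

lemma Dg_card (n : ℕ) : ((Dg n).card : ℤ) = 2*(n:ℤ)+1 := by
  have : Dg n = (Finset.Icc (-(n:ℤ)) (n:ℤ)).image fun k => (k, k) := by
    ext x
    simp only [Dg, Finset.mem_filter, mem_Adiam, Finset.mem_image, Finset.mem_Icc, Prod.ext_iff]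
    constructor
    · rintro ⟨⟨h1,h2,h3,h4,h5,h6⟩, h7⟩
      exact ⟨x.1, ⟨h1, h2⟩, rfl, h7⟩
    · rintro ⟨k, ⟨h1, h2⟩, e1, e2⟩
      omega
  rw [this, Finset.card_image_of_injective _ (fun a b h => (Prod.mk.injEq _ _ _ _ ▸ h).1),
    Int.card_Icc]
  omega

lemma Cb_diag_sub (n : ℕ) : ∀ y ∈ Cb n, y.1 = y.2 → y ∈ Dg n := by
  intro y hy hd
  simp only [Cb, Finset.mem_biUnion, Finset.mem_filter] at hy
  obtain ⟨x, ⟨hxA, hxd⟩, hyx⟩ := hy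
  rw [mem_Adiam] at hxA
  rw [mem_Ebox] at hyx
  simp only [Dg, Finset.mem_filter, mem_Adiam]
  omega

lemma Cb_sub (n : ℕ) : Cb n ⊆ Adiam (n+2) := by
  intro y hy
  simp only [Cb, Finset.mem_biUnion, Finset.mem_filter] at hy
  obtain ⟨x, ⟨hxA, _⟩, hyx⟩ := hy
  rw [mem_Adiam] at hxA
  rw [mem_Ebox] at hyx
  rw [mem_Adiam]
  push_cast
  omega

lemma lower_sub (n : ℕ) : (Adiam n).filter (fun x => ¬ x.1 = x.2) ⊆ Cb n \ Dg n := by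
  intro x hx
  have hx' := Finset.mem_filter.mp hx
  rw [Finset.mem_sdiff]
  constructor
  · exact Finset.mem_biUnion.mpr ⟨x, hx, mem_Ebox.mpr (by omega)⟩
  · simp only [Dg, Finset.mem_filter]
    tauto

lemma event_eq (Y : ℤ × ℤ → Ω → ℝ) (n : ℕ) (u : ℝ) (hu : 0 < u) :
    {ω | ∀ x ∈ Adiam n, Zfield Y x ω ≤ u} =
      ⋂ y ∈ Dg n ∪ (Cb n \ Dg n), {ω | Y y ω ≤ if y.1 = y.2 then u/9 else u} := by
  ext ω
  simp only [Set.mem_setOf_eq, Set.mem_iInter]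
  constructor
  · intro h y hyS
    by_cases hd : y.1 = y.2
    · have hyD : y ∈ Dg n := by
        rcases Finset.mem_union.mp hyS with h' | h'
        · exact h'
        · exact Cb_diag_sub n y (Finset.mem_sdiff.mp h').1 hd
      have hyA : y ∈ Adiam n := (Finset.mem_filter.mp hyD).1
      have hZ := h y hyA
      rw [Zfield, if_pos hd] at hZ
      rw [if_pos hd]
      linarith
    · rw [if_neg hd]
      have hyC : y ∈ Cb n := by
        rcases Finset.mem_union.mp hyS with h' | h'
        · exact absurd (Finset.mem_filter.mp h').2 hd
        · exact (Finset.mem_sdiff.mp h').1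
      obtain ⟨x, hx, hyx⟩ := Finset.mem_biUnion.mp hyC
      obtain ⟨hxA, hxd⟩ := Finset.mem_filter.mp hx
      have hZ := h x hxA
      rw [Zfield, if_neg hxd] at hZ
      exact le_trans (Finset.le_sup' (fun z => Y z ω) hyx) hZ
  · intro h x hxA
    by_cases hd : x.1 = x.2
    · have hxS : x ∈ Dg n ∪ (Cb n \ Dg n) :=
        Finset.mem_union_left _ (Finset.mem_filter.mpr ⟨hxA, hd⟩)
      have hx' := h x hxS
      rw [if_pos hd] at hx'
      rw [Zfield, if_pos hd]
      linarith
    · rw [Zfield, if_neg hd]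
      apply Finset.sup'_le
      intro z hz
      have hzC : z ∈ Cb n := Finset.mem_biUnion.mpr ⟨x, Finset.mem_filter.mpr ⟨hxA, hd⟩, hz⟩
      have hzS : z ∈ Dg n ∪ (Cb n \ Dg n) := by
        by_cases hzD : z ∈ Dg n
        · exact Finset.mem_union_left _ hzD
        · exact Finset.mem_union_right _ (Finset.mem_sdiff.mpr ⟨hzC, hzD⟩)
      have hz' := h z hzS
      by_cases hzd : z.1 = z.2
      · rw [if_pos hzd] at hz'; linarith
      · rwa [if_neg hzd] at hz'

lemma prob_eq (μ : Measure Ω) [IsProbabilityMeasure μ] (Y : ℤ × ℤ → Ω → ℝ)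
    (hind : ProbabilityTheory.iIndepFun Y μ)
    (hY : ∀ x, ∀ y : ℝ, 0 < y → (μ {ω | Y x ω ≤ y}).toReal = Real.exp (-(y⁻¹ / 9)))
    (n : ℕ) (u : ℝ) (hu : 0 < u) :
    (μ {ω | ∀ x ∈ Adiam n, Zfield Y x ω ≤ u}).toReal =
      Real.exp (-u⁻¹) ^ (Dg n).card * Real.exp (-(u⁻¹/9)) ^ (Cb n \ Dg n).card := by
  rw [event_eq Y n u hu, meas_biInter_le μ Y hind, ENNReal.toReal_prod,
    Finset.prod_union Finset.disjoint_sdiff]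
  congr 1
  · rw [Finset.prod_congr rfl (fun y hy => ?_), Finset.prod_const]
    have hd : y.1 = y.2 := (Finset.mem_filter.mp hy).2
    rw [if_pos hd, hY y (u/9) (by positivity)]
    congr 1
    rw [inv_div, div_div]
    congr 1
    rw [eq_comm, inv_eq_iff_eq_inv, inv_div]
    ring
  · rw [Finset.prod_congr rfl (fun y hy => ?_), Finset.prod_const]
    have hd : ¬ y.1 = y.2 := by
      intro hcontra
      have := Cb_diag_sub n y (Finset.mem_sdiff.mp hy).1 hcontra
      exact (Finset.mem_sdiff.mp hy).2 this
    rw [if_neg hd, hY y u hu]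

lemma part3 (μ : Measure Ω) [IsProbabilityMeasure μ] (Y : ℤ × ℤ → Ω → ℝ)
    (hind : ProbabilityTheory.iIndepFun Y μ)
    (hY : ∀ x, ∀ y : ℝ, 0 < y → (μ {ω | Y x ω ≤ y}).toReal = Real.exp (-(y⁻¹ / 9)))
    (τ : ℝ) (hτ : 0 < τ) :
    Tendsto (fun n : ℕ =>
        (μ {ω | ∀ x ∈ Adiam n, Zfield Y x ω ≤ (3 * (n : ℝ) ^ 2 + 3 * n + 1) / τ}).toReal)
      atTop (𝓝 (Real.exp (-(τ / 9)))) := by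
  have hfpos : ∀ n : ℕ, (0:ℝ) < 3 * (n:ℝ)^2 + 3*n + 1 := fun n => by positivity
  have hdg : ∀ n : ℕ, ((Dg n).card : ℝ) = 2*(n:ℝ)+1 := by
    intro n
    have := Dg_card n
    exact_mod_cast this
  have hak : ∀ n : ℕ, ((Adiam n).card : ℝ) = 3*(n:ℝ)^2 + 3*n + 1 := by
    intro n
    have := Adiam_card n
    exact_mod_cast this
  have key : ∀ n : ℕ,
      (μ {ω | ∀ x ∈ Adiam n, Zfield Y x ω ≤ (3 * (n : ℝ) ^ 2 + 3 * n + 1) / τ}).toReal =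
        Real.exp (-(τ * ((2*(n:ℝ)+1) / (3*(n:ℝ)^2 + 3*n + 1))
          + (τ/9) * (((Cb n \ Dg n).card : ℝ) / (3*(n:ℝ)^2 + 3*n + 1)))) := by
    intro n
    have hu : (0:ℝ) < (3 * (n : ℝ) ^ 2 + 3 * n + 1) / τ := div_pos (hfpos n) hτ
    rw [prob_eq μ Y hind hY n _ hu, ← Real.exp_nat_mul, ← Real.exp_nat_mul, ← Real.exp_add]
    congr 1
    rw [inv_div, ← hdg n]
    ring
  have hml : ∀ n : ℕ,
      (3*(n:ℝ)^2 + 1*(n:ℝ) + 0) / (3*(n:ℝ)^2 + 3*(n:ℝ) + 1) ≤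
        ((Cb n \ Dg n).card : ℝ) / (3*(n:ℝ)^2 + 3*(n:ℝ) + 1) := by
    intro n
    have h1 : (((Adiam n).filter (fun x : ℤ × ℤ => ¬ x.1 = x.2)).card : ℝ) ≤ ((Cb n \ Dg n).card : ℝ) := by
      exact_mod_cast Finset.card_le_card (lower_sub n)
    have h2 : ((Adiam n).filter (fun x : ℤ × ℤ => x.1 = x.2)).card
        + ((Adiam n).filter (fun x : ℤ × ℤ => ¬ x.1 = x.2)).card = (Adiam n).card :=
      Finset.card_filter_add_card_filter_not (fun x : ℤ × ℤ => x.1 = x.2)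
    have h2' : (((Adiam n).filter (fun x : ℤ × ℤ => x.1 = x.2)).card : ℝ)
        + (((Adiam n).filter (fun x : ℤ × ℤ => ¬ x.1 = x.2)).card : ℝ) = ((Adiam n).card : ℝ) := by
      exact_mod_cast h2
    have h3 : (((Adiam n).filter (fun x : ℤ × ℤ => x.1 = x.2)).card : ℝ) = 2*(n:ℝ)+1 := hdg n
    have h4 := hak n
    gcongr
    linarith
  have hmu : ∀ n : ℕ,
      ((Cb n \ Dg n).card : ℝ) / (3*(n:ℝ)^2 + 3*(n:ℝ) + 1) ≤
        (3*(n:ℝ)^2 + 15*(n:ℝ) + 19) / (3*(n:ℝ)^2 + 3*(n:ℝ) + 1) := by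
    intro n
    have h1 : ((Cb n \ Dg n).card : ℝ) ≤ ((Adiam (n+2)).card : ℝ) := by
      exact_mod_cast Finset.card_le_card ((Finset.sdiff_subset).trans (Cb_sub n))
    have h2 := hak (n+2)
    push_cast at h2
    have e : 3*((n:ℝ)+2)^2 + 3*((n:ℝ)+2) + 1 = 3*(n:ℝ)^2 + 15*(n:ℝ) + 19 := by ring
    gcongr
    linarith
  have h33 : (3:ℝ)/3 = 1 := by norm_num
  have hlow := ratlim 3 1 0 3 3 1 (by norm_num)
  have hup := ratlim 3 15 19 3 3 1 (by norm_num)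
  rw [h33] at hlow hup
  have hquot : Tendsto (fun n : ℕ =>
      ((Cb n \ Dg n).card : ℝ) / (3*(n:ℝ)^2 + 3*(n:ℝ) + 1)) atTop (𝓝 1) :=
    tendsto_of_tendsto_of_tendsto_of_le_of_le hlow hup hml hmu
  have hzero : Tendsto (fun n : ℕ => τ * ((2*(n:ℝ)+1) / (3*(n:ℝ)^2 + 3*(n:ℝ) + 1)))
      atTop (𝓝 (τ * 0)) := by
    apply Tendsto.const_mul
    have h := ratlim 0 2 1 3 3 1 (by norm_num)
    rw [zero_div] at h
    exact h.congr fun n => by ring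
  have hsum := hzero.add (hquot.const_mul (τ/9))
  have hval : τ * 0 + (τ/9) * 1 = τ/9 := by ring
  rw [hval] at hsum
  have hfin := (Real.continuous_exp.tendsto _).comp hsum.neg
  refine hfin.congr fun n => ?_
  exact (key n).symm

/-- **Example 3.2 (extremal index 1/9).** For the 1-dependent field `Z` built from iid `Y` with
`F_Y(y) = exp(-y⁻¹/9)`, the margins are unit Fréchet, `#Aₙ = 3n²+3n+1`, and for
`uₙ(τ) = f(n)/τ` one has `P(⋁_{x∈Aₙ} Z(x) ≤ uₙ(τ)) → exp(-τ/9)`, i.e. `θ_A = 1/9`. -/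
theorem example3_2 (μ : Measure Ω) [IsProbabilityMeasure μ] (Y : ℤ × ℤ → Ω → ℝ)
    (hmeas : ∀ x, Measurable (Y x))
    (hind : ProbabilityTheory.iIndepFun Y μ)
    (hY : ∀ x, ∀ y : ℝ, 0 < y → (μ {ω | Y x ω ≤ y}).toReal = Real.exp (-(y⁻¹ / 9)))
    (hY0 : ∀ x, ∀ y : ℝ, y ≤ 0 → (μ {ω | Y x ω ≤ y}).toReal = 0) :
    (∀ n : ℕ, ((Adiam n).card : ℤ) = 3 * (n : ℤ) ^ 2 + 3 * (n : ℤ) + 1) ∧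
    (∀ x : ℤ × ℤ, ∀ y : ℝ, 0 < y →
      (μ {ω | Zfield Y x ω ≤ y}).toReal = Real.exp (-y⁻¹)) ∧
    ∀ τ : ℝ, 0 < τ →
      Tendsto (fun n : ℕ =>
          (μ {ω | ∀ x ∈ Adiam n, Zfield Y x ω ≤ (3 * (n : ℝ) ^ 2 + 3 * n + 1) / τ}).toReal)
        atTop (nhds (Real.exp (-(τ / 9)))) :=
  ⟨Adiam_card, fun x y hy => margin μ Y hind hY x y hy, fun τ hτ => part3 μ Y hind hY τ hτ⟩
end
end

section
/- Let {Y(x) : x ∈ ℤ²} be independent and identically distributed random variables with common distribution function F_Y(y) = exp(−y^{−1}/9) for y > 0, define Z(x) = 9·Y(x) if π_1(x) = π_2(x), and Z(x) = ⋁_{y∈E(x)} Y(y) otherwise, where E(x) = {y ∈ ℤ² : |π_1(y) − π_1(x)| ≤ 1 and |π_2(y) − π_2(x)| ≤ 1}, and let A_n = {x ∈ ℤ² : −n ≤ π_1(x) ≤ n and (−n) ∨ (π_1(x) − n) ≤ π_2(x) ≤ (π_1(x) + n) ∧ n}. If C, D ⊂ A_n are sets such that, for each i = 1,2, π_i(C)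 and π_i(D) are sets of consecutive values of π_i(A_n) separated by at least 2 values of π_i(A_n), then the random variables ⋁_{x∈C} Z(x) and ⋁_{x∈D} Z(x) are independent; hence α(l_n,u_n) = 0 for any l_n ≥ 2 and the sequence Z_A satisfies condition D(u_n,k_n,l_n) for all integer sequences k_n → ∞, l_n → ∞ with k_n l_n f_i(n)/f(n) → 0, i = 1,2, and any real levels u_n. -/
open MeasureTheory Filter Topology

noncomputable section

variable {Ω : Type*} [MeasurableSpace Ω]

/-- The `i`-th cartesian projection of a finite set of points of `ℤ²`. -/
def projSetZ (i : Fin 2) (B : Finset (ℤ × ℤ)) : Finset ℤ :=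
  if i = 0 then B.image Prod.fst else B.image Prod.snd

/-- `I` is a set of consecutive values of `T`. -/
def ConsecInZ (T I : Finset ℤ) : Prop :=
  I ⊆ T ∧ ∀ a ∈ I, ∀ b ∈ I, ∀ c ∈ T, a ≤ c → c ≤ b → c ∈ I

/-- `I` lies entirely before `J`, with at least `l` values of `T` strictly in between. -/
def SepOrderedZ (T I J : Finset ℤ) (l : ℕ) : Prop :=
  (∀ a ∈ I, ∀ b ∈ J, a < b) ∧
    l ≤ (T.filter fun c => (∀ a ∈ I, a < c) ∧ ∀ b ∈ J, c < b).card

/-- `I` and `J` are separated by at least `l` values of `T`. -/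
def SepInZ (T I J : Finset ℤ) (l : ℕ) : Prop := SepOrderedZ T I J l ∨ SepOrderedZ T J I l

/-- `C, D ⊆ Aₙ` are, in each coordinate direction, sets of consecutive values of the
projections of `Aₙ`, separated by at least `l` values of those projections. -/
def SepPairZ (An C D : Finset (ℤ × ℤ)) (l : ℕ) : Prop :=
  C ⊆ An ∧ D ⊆ An ∧ ∀ i : Fin 2,
    ConsecInZ (projSetZ i An) (projSetZ i C) ∧ ConsecInZ (projSetZ i An) (projSetZ i D) ∧
      SepInZ (projSetZ i An) (projSetZ i C) (projSetZ i D) l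

/-- The mixing coefficient `α(lₙ, uₙ)`. -/
def alphaMixZ (μ : Measure Ω) (Z : ℤ × ℤ → Ω → ℝ) (An : Finset (ℤ × ℤ)) (l : ℕ)
    (u : ℝ) : ℝ :=
  sSup {v | ∃ C D : Finset (ℤ × ℤ), SepPairZ An C D l ∧
    v = |(μ {ω | ∀ x ∈ C ∪ D, Z x ω ≤ u}).toReal -
      (μ {ω | ∀ x ∈ C, Z x ω ≤ u}).toReal * (μ {ω | ∀ x ∈ D, Z x ω ≤ u}).toReal|}

/-- Condition `D(uₙ, kₙ, lₙ)` of coordinatewise long range dependence. -/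
def CondDZ (μ : Measure Ω) (Z : ℤ × ℤ → Ω → ℝ) (A : ℕ → Finset (ℤ × ℤ))
    (u : ℕ → ℝ) (k l : ℕ → ℕ) : Prop :=
  (∀ n, 0 < k n) ∧ (∀ n, 0 < l n) ∧
  Tendsto (fun n => (l n : ℝ)) atTop atTop ∧
  Tendsto (fun n => (k n : ℝ)) atTop atTop ∧
  (∀ i : Fin 2, Tendsto
    (fun n => (k n : ℝ) * (l n : ℝ) * ((projSetZ i (A n)).card : ℝ) / ((A n).card : ℝ))
    atTop (nhds 0)) ∧
  Tendsto (fun n => (k n : ℝ) ^ 2 * alphaMixZ μ Z (A n) (l n) (u n)) atTop (nhds 0)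

/-! ### Auxiliary lemmas -/

lemma self_mem_Ebox (x : ℤ × ℤ) : x ∈ Ebox x := by
  simp only [Ebox, Finset.mem_product, Finset.mem_Icc]
  omega

lemma sepOrdered_gap {T I J : Finset ℤ} {l : ℕ} (h : SepOrderedZ T I J l) (hl : 2 ≤ l)
    {a b : ℤ} (ha : a ∈ I) (hb : b ∈ J) : a + 3 ≤ b := by
  obtain ⟨h1, h2⟩ := h
  have hcard : 1 < (T.filter fun c => (∀ a ∈ I, a < c) ∧ ∀ b ∈ J, c < b).card :=
    lt_of_lt_of_le hl h2
  obtain ⟨c1, hc1, c2, hc2, hne⟩ := Finset.one_lt_card.mp hcard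
  simp only [Finset.mem_filter] at hc1 hc2
  have h3 := hc1.2.1 a ha
  have h4 := hc1.2.2 b hb
  have h5 := hc2.2.1 a ha
  have h6 := hc2.2.2 b hb
  omega

lemma sep_disjoint {n : ℕ} {C D : Finset (ℤ × ℤ)} {l : ℕ} (hl : 2 ≤ l)
    (h : SepPairZ (Adiam n) C D l) :
    Disjoint (C.biUnion Ebox) (D.biUnion Ebox) := by
  obtain ⟨-, -, hsep⟩ := h
  obtain ⟨-, -, hsep0⟩ := hsep 0
  rw [Finset.disjoint_left]
  rintro y hy hy'
  obtain ⟨x, hx, hyx⟩ := Finset.mem_biUnion.mp hy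
  obtain ⟨x', hx', hyx'⟩ := Finset.mem_biUnion.mp hy'
  have eproj : ∀ B : Finset (ℤ × ℤ), projSetZ 0 B = B.image Prod.fst := fun B => if_pos rfl
  have hxI : x.1 ∈ projSetZ 0 C := by
    rw [eproj, Finset.mem_image]; exact ⟨x, hx, rfl⟩
  have hxJ : x'.1 ∈ projSetZ 0 D := by
    rw [eproj, Finset.mem_image]; exact ⟨x', hx', rfl⟩
  have hgap : x.1 + 3 ≤ x'.1 ∨ x'.1 + 3 ≤ x.1 := by
    rcases hsep0 with hs | hs
    · exact Or.inl (sepOrdered_gap hs hl hxI hxJ)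
    · exact Or.inr (sepOrdered_gap hs hl hxJ hxI)
  simp only [Ebox, Finset.mem_product, Finset.mem_Icc] at hyx hyx'
  omega

/-- The max of `Zfield` over `B` as a function of the values of `Y` on `ℤ²`. -/
def phiB (B : Finset (ℤ × ℤ)) (hB : B.Nonempty) : ((ℤ × ℤ) → ℝ) → ℝ :=
  B.sup' hB fun x v => if x.1 = x.2 then 9 * v x else (Ebox x).sup' (Ebox_nonempty x) fun y => v y

lemma measurable_phiB (B : Finset (ℤ × ℤ)) (hB : B.Nonempty) : Measurable (phiB B hB) := by
  unfold phiB
  apply Finset.measurable_sup' hB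
  intro x hx
  by_cases h : x.1 = x.2
  · simp only [h, if_pos rfl]
    exact (measurable_pi_apply x).const_mul 9
  · simp only [h, if_neg, if_false]
    have h2 := Finset.measurable_sup' (Ebox_nonempty x)
      (f := fun y (v : (ℤ × ℤ) → ℝ) => v y) fun y _ => measurable_pi_apply y
    have e : (fun v : (ℤ × ℤ) → ℝ => (Ebox x).sup' (Ebox_nonempty x) fun y => v y) =
        (Ebox x).sup' (Ebox_nonempty x) (fun y (v : (ℤ × ℤ) → ℝ) => v y) := by
      funext v; rw [Finset.sup'_apply]
    rw [e]; exact h2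

/-- Extension of a function on a finite subset of `ℤ²` by zero. -/
def extS (S : Finset (ℤ × ℤ)) (v : {x // x ∈ S} → ℝ) : (ℤ × ℤ) → ℝ :=
  fun z => if h : z ∈ S then v ⟨z, h⟩ else 0

lemma measurable_extS (S : Finset (ℤ × ℤ)) : Measurable (extS S) := by
  apply measurable_pi_lambda
  intro z
  by_cases h : z ∈ S
  · simp only [extS, dif_pos h]
    exact measurable_pi_apply _
  · simp only [extS, dif_neg h]
    exact measurable_const

lemma phiB_extS_eq (Y : ℤ × ℤ → Ω → ℝ) (B : Finset (ℤ × ℤ)) (hB : B.Nonempty) (ω : Ω) :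
    phiB B hB (extS (B.biUnion Ebox) fun i => Y i.1 ω) =
      B.sup' hB fun x => Zfield Y x ω := by
  rw [phiB, Finset.sup'_apply]
  apply Finset.sup'_congr _ rfl
  intro x hx
  have hxS : x ∈ B.biUnion Ebox := Finset.mem_biUnion.mpr ⟨x, hx, self_mem_Ebox x⟩
  by_cases h : x.1 = x.2
  · simp only [Zfield, if_pos h, extS, dif_pos hxS]
  · simp only [Zfield, if_neg h]
    apply Finset.sup'_congr _ rfl
    intro y hy
    have hyS : y ∈ B.biUnion Ebox := Finset.mem_biUnion.mpr ⟨x, hx, hy⟩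
    simp only [extS, dif_pos hyS]

lemma indep_sup_aux (μ : Measure Ω) (Y : ℤ × ℤ → Ω → ℝ)
    (hmeas : ∀ x, Measurable (Y x))
    (hind : ProbabilityTheory.iIndepFun Y μ)
    {C D : Finset (ℤ × ℤ)} (hC : C.Nonempty) (hD : D.Nonempty)
    (hdisj : Disjoint (C.biUnion Ebox) (D.biUnion Ebox)) :
    ProbabilityTheory.IndepFun (fun ω => C.sup' hC fun x => Zfield Y x ω)
      (fun ω => D.sup' hD fun x => Zfield Y x ω) μ := by
  have h0 := hind.indepFun_finset (C.biUnion Ebox) (D.biUnion Ebox) hdisj hmeas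
  have h1 := h0.comp ((measurable_phiB C hC).comp (measurable_extS (C.biUnion Ebox)))
    ((measurable_phiB D hD).comp (measurable_extS (D.biUnion Ebox)))
  have e1 : (phiB C hC ∘ extS (C.biUnion Ebox)) ∘ (fun ω (i : C.biUnion Ebox) => Y i ω) =
      fun ω => C.sup' hC fun x => Zfield Y x ω := by
    funext ω; exact phiB_extS_eq Y C hC ω
  have e2 : (phiB D hD ∘ extS (D.biUnion Ebox)) ∘ (fun ω (i : D.biUnion Ebox) => Y i ω) =
      fun ω => D.sup' hD fun x => Zfield Y x ω := by
    funext ω; exact phiB_extS_eq Y D hD ω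
  rw [e1, e2] at h1
  exact h1

/-- **Example 3.2 (condition `D`).** For the 1-dependent field `Z`, maxima over sets `C, D ⊆ Aₙ`
that are coordinatewise separated by at least 2 values are independent; hence `α(lₙ,uₙ) = 0` for
`lₙ ≥ 2` and condition `D(uₙ,kₙ,lₙ)` holds for all admissible sequences `kₙ, lₙ` and all
levels `uₙ`. -/
theorem example3_2_D (μ : Measure Ω) [IsProbabilityMeasure μ] (Y : ℤ × ℤ → Ω → ℝ)
    (hmeas : ∀ x, Measurable (Y x))
    (hind : ProbabilityTheory.iIndepFun Y μ)
    (hY : ∀ x, ∀ y : ℝ, 0 < y → (μ {ω | Y x ω ≤ y}).toReal = Real.exp (-(y⁻¹ / 9)))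
    (hY0 : ∀ x, ∀ y : ℝ, y ≤ 0 → (μ {ω | Y x ω ≤ y}).toReal = 0) :
    (∀ n : ℕ, ∀ C D : Finset (ℤ × ℤ), ∀ (hC : C.Nonempty) (hD : D.Nonempty),
      SepPairZ (Adiam n) C D 2 →
        ProbabilityTheory.IndepFun (fun ω => C.sup' hC fun x => Zfield Y x ω)
          (fun ω => D.sup' hD fun x => Zfield Y x ω) μ) ∧
    (∀ n : ℕ, ∀ l : ℕ, 2 ≤ l → ∀ u : ℝ, alphaMixZ μ (Zfield Y) (Adiam n) l u = 0) ∧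
    ∀ (u : ℕ → ℝ) (k l : ℕ → ℕ), (∀ n, 0 < k n) → (∀ n, 0 < l n) →
      Tendsto (fun n => (k n : ℝ)) atTop atTop →
      Tendsto (fun n => (l n : ℝ)) atTop atTop →
      (∀ i : Fin 2, Tendsto
        (fun n => (k n : ℝ) * (l n : ℝ) * ((projSetZ i (Adiam n)).card : ℝ) /
          ((Adiam n).card : ℝ)) atTop (nhds 0)) →
      CondDZ μ (Zfield Y) Adiam u k l := by
  have part1 : ∀ n : ℕ, ∀ C D : Finset (ℤ × ℤ), ∀ (hC : C.Nonempty) (hD : D.Nonempty),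
      SepPairZ (Adiam n) C D 2 →
        ProbabilityTheory.IndepFun (fun ω => C.sup' hC fun x => Zfield Y x ω)
          (fun ω => D.sup' hD fun x => Zfield Y x ω) μ := by
    intro n C D hC hD hsep
    exact indep_sup_aux μ Y hmeas hind hC hD (sep_disjoint le_rfl hsep)
  have part2 : ∀ n : ℕ, ∀ l : ℕ, 2 ≤ l → ∀ u : ℝ,
      alphaMixZ μ (Zfield Y) (Adiam n) l u = 0 := by
    intro n l hl u
    rw [alphaMixZ]
    set V : Set ℝ := {v | ∃ C D : Finset (ℤ × ℤ), SepPairZ (Adiam n) C D l ∧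
      v = |(μ {ω | ∀ x ∈ C ∪ D, Zfield Y x ω ≤ u}).toReal -
        (μ {ω | ∀ x ∈ C, Zfield Y x ω ≤ u}).toReal *
          (μ {ω | ∀ x ∈ D, Zfield Y x ω ≤ u}).toReal|} with hV
    have hsub : V ⊆ {0} := by
      rintro v ⟨C, D, hsep, rfl⟩
      rcases C.eq_empty_or_nonempty with rfl | hC
      · simp
      rcases D.eq_empty_or_nonempty with rfl | hD
      · simp
      have hindep := indep_sup_aux μ Y hmeas hind hC hD (sep_disjoint hl hsep)
      have hkey := hindep.measure_inter_preimage_eq_mul (Set.Iic u) (Set.Iic u)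
        measurableSet_Iic measurableSet_Iic
      have eC : {ω | ∀ x ∈ C, Zfield Y x ω ≤ u} =
          (fun ω => C.sup' hC fun x => Zfield Y x ω) ⁻¹' Set.Iic u := by
        ext ω; simp [Finset.sup'_le_iff]
      have eD : {ω | ∀ x ∈ D, Zfield Y x ω ≤ u} =
          (fun ω => D.sup' hD fun x => Zfield Y x ω) ⁻¹' Set.Iic u := by
        ext ω; simp [Finset.sup'_le_iff]
      have eCD : {ω | ∀ x ∈ C ∪ D, Zfield Y x ω ≤ u} =
          (fun ω => C.sup' hC fun x => Zfield Y x ω) ⁻¹' Set.Iic u ∩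
          (fun ω => D.sup' hD fun x => Zfield Y x ω) ⁻¹' Set.Iic u := by
        ext ω
        simp only [Set.mem_setOf_eq, Set.mem_inter_iff, Set.mem_preimage, Set.mem_Iic,
          Finset.sup'_le_iff, Finset.mem_union]
        constructor
        · intro h; exact ⟨fun x hx => h x (Or.inl hx), fun x hx => h x (Or.inr hx)⟩
        · rintro ⟨h1, h2⟩ x (hx | hx)
          · exact h1 x hx
          · exact h2 x hx
      rw [eC, eD, eCD, hkey, ENNReal.toReal_mul, sub_self, abs_zero]
      rfl
    rcases Set.eq_empty_or_nonempty V with hVe | hVne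
    · rw [hVe, Real.sSup_empty]
    · obtain ⟨v, hv⟩ := hVne
      have h0 : (0 : ℝ) ∈ V := by have := hsub hv; rwa [Set.mem_singleton_iff.mp this] at hv
      have : V = {0} := Set.Subset.antisymm hsub (Set.singleton_subset_iff.mpr h0)
      rw [this, csSup_singleton]
  refine ⟨part1, part2, ?_⟩
  intro u k l hk hl hktop hltop hproj
  refine ⟨hk, hl, hltop, hktop, hproj, ?_⟩
  have hev : ∀ᶠ n in atTop, (k n : ℝ) ^ 2 * alphaMixZ μ (Zfield Y) (Adiam n) (l n) (u n) = 0 := by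
    have h2 : ∀ᶠ n in atTop, (2 : ℝ) ≤ (l n : ℝ) := hltop.eventually_ge_atTop 2
    filter_upwards [h2] with n hn
    have hln : 2 ≤ l n := by exact_mod_cast hn
    rw [part2 n (l n) hln (u n), mul_zero]
  exact (tendsto_congr' (hev.mono fun n hn => hn.symm)).mp tendsto_const_nhds
end
end
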